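/- Per-iteration descent inequality for momentum Frank–Wolfe: for every t ≥ 0, f(z_{t+1}) ≤ f(z_t) + 4Lη²D² − η G(z_t) + 2ηD ‖∇f(z_t) − v_t‖ + (ηD/(t+2)) ∑_{i=0}^{t−1} θ_i ‖∇f(z_i) − v_i‖. -/

import Mathlib

open scoped RealInnerProductSpace

section Aux

lemma mfw_norm_smul_add_smul_le {E : Type*} [NormedAddCommGroup E] [NormedSpace ℝ E]
    (a b : ℝ) (ha : 0 ≤ a) (hb : 0 ≤ b) (u v : E) :
    ‖a • u + b • v‖ ≤ a * ‖u‖ + b * ‖v‖ := by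
  calc ‖a • u + b • v‖ ≤ ‖a • u‖ + ‖b • v‖ := norm_add_le _ _
  _ = a * ‖u‖ + b * ‖v‖ := by
      rw [norm_smul, norm_smul, Real.norm_eq_abs, Real.norm_eq_abs,
        abs_of_nonneg ha, abs_of_nonneg hb]

lemma mfw_scal_e (p q η D : ℝ) (hp : 0 < p) (hp2 : p ≤ 1/2) (hq : 0 < q) (hqp : q ≤ p)
    (hη : 0 < η) (hη1 : η < 1) (hD : 0 < D) :
    ((1-p)*(1-(1+q)*η))*(η*D) + ((1-p)*(q*η))*D ≤ η*D := by
  have key : ((1-p)*(1-(1+q)*η))*(η*D) + ((1-p)*(q*η))*D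
      = ((1-p)*(1+q))*((1-η)*(η*D)) := by ring
  have h1 : (1-p)*(1+q) ≤ 1 := by nlinarith [mul_pos hp hq]
  have h2 : 0 ≤ (1-η)*(η*D) := mul_nonneg (by linarith) (by positivity)
  have h3 : ((1-p)*(1+q))*((1-η)*(η*D)) ≤ 1*((1-η)*(η*D)) :=
    mul_le_mul_of_nonneg_right h1 h2
  have h4 : (1-η)*(η*D) ≤ η*D := by nlinarith [mul_pos hη hD]
  linarith [h3, h4, key.le, key.ge]

lemma mfw_scal_u0 (p q η : ℝ) (hp : 0 < p) (hp2 : p ≤ 1/2) (hq : 0 < q) (hq2 : q ≤ 1/2)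
    (hη : 0 < η) : (1-p)*η + p*((1+q)*η) ≤ 3/2 * η := by
  have key : (1-p)*η + p*((1+q)*η) = (1+p*q)*η := by ring
  have h1 : p*q ≤ (1/2)*(1/2) := mul_le_mul hp2 hq2 hq.le (by norm_num)
  have h2 : (1+p*q)*η ≤ (1+1/4)*η := by
    apply mul_le_mul_of_nonneg_right (by linarith) hη.le
  linarith [key.le, key.ge]

lemma mfw_scal_u1 (p q η D E : ℝ) (hp : 0 < p) (hp2 : p ≤ 1/3) (hq : 0 < q) (hq2 : q ≤ 1/6)
    (hη : 0 < η) (hη23 : η < 2/3) (hD : 0 < D) (hE : 0 ≤ E) (hED : E ≤ η*D) :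
    ((1-p)*η + p*((1+q)*η))*D + (p*(1-(1+q)*η))*E ≤ 3/2 * (η*D) := by
  have hqη : 0 ≤ (1+q)*η := mul_nonneg (by linarith) hη.le
  have g1 : 0 ≤ 1-(1+q)*η := by nlinarith
  have g2 : p*(1-(1+q)*η) ≤ p := by nlinarith [mul_nonneg hp.le hqη]
  have g3 : (p*(1-(1+q)*η))*E ≤ p*E := mul_le_mul_of_nonneg_right g2 hE
  have g4 : p*E ≤ p*(η*D) := mul_le_mul_of_nonneg_left hED hp.le
  have g5 : p*(η*D) ≤ (1/3)*(η*D) := mul_le_mul_of_nonneg_right hp2 (by positivity)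
  have key : ((1-p)*η + p*((1+q)*η))*D = (1+p*q)*(η*D) := by ring
  have h1 : p*q ≤ (1/3)*(1/6) := mul_le_mul hp2 hq2 hq.le (by norm_num)
  have h2 : (1+p*q)*(η*D) ≤ (1+1/18)*(η*D) :=
    mul_le_mul_of_nonneg_right (by linarith) (by positivity)
  nlinarith [mul_pos hη hD]

/-- Descent lemma (with the crude constant `L` instead of `L/2`, which suffices here). -/
lemma mfw_descent {d : ℕ} (f : EuclideanSpace ℝ (Fin d) → ℝ) (L : ℝ) (hL : 0 ≤ L)
    (hdiff : Differentiable ℝ f)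
    (hLip : ∀ u v', ‖gradient f u - gradient f v'‖ ≤ L * ‖u - v'‖)
    (a b : EuclideanSpace ℝ (Fin d)) :
    f b ≤ f a + ⟪gradient f a, b - a⟫ + L * ‖b - a‖ ^ 2 := by
  have hder : ∀ p : EuclideanSpace ℝ (Fin d),
      HasFDerivAt (fun q => f q - ⟪gradient f a, q⟫)
      ((InnerProductSpace.toDual ℝ (EuclideanSpace ℝ (Fin d)))
        (gradient f p - gradient f a)) p := by
    intro p
    have h1 : HasFDerivAt f
        ((InnerProductSpace.toDual ℝ (EuclideanSpace ℝ (Fin d))) (gradient f p)) p :=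
      (hdiff p).hasGradientAt.hasFDerivAt
    have h2 : HasFDerivAt (fun q : EuclideanSpace ℝ (Fin d) => ⟪gradient f a, q⟫)
        ((InnerProductSpace.toDual ℝ (EuclideanSpace ℝ (Fin d))) (gradient f a)) p := by
      simpa using ((InnerProductSpace.toDual ℝ (EuclideanSpace ℝ (Fin d)))
        (gradient f a)).hasFDerivAt (x := p)
    rw [map_sub]
    exact h1.sub h2
  have key : ‖(f b - ⟪gradient f a, b⟫) - (f a - ⟪gradient f a, a⟫)‖
      ≤ (L * ‖b - a‖) * ‖b - a‖ := by
    apply Convex.norm_image_sub_le_of_norm_hasFDerivWithin_le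
      (f' := fun p => (InnerProductSpace.toDual ℝ (EuclideanSpace ℝ (Fin d)))
        (gradient f p - gradient f a))
      (fun p _ => (hder p).hasFDerivWithinAt) ?_ (convex_segment a b)
      (left_mem_segment ℝ a b) (right_mem_segment ℝ a b)
    intro p hp
    rw [(InnerProductSpace.toDual ℝ (EuclideanSpace ℝ (Fin d))).norm_map]
    obtain ⟨u', v', hu, hv, huv, rfl⟩ := hp
    have hd : u' • a + v' • b - a = v' • (b - a) := by
      have : u' = 1 - v' := by linarith
      rw [this]; module
    calc ‖gradient f (u' • a + v' • b) - gradient f a‖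
        ≤ L * ‖u' • a + v' • b - a‖ := hLip _ _
    _ ≤ L * ‖b - a‖ := by
        rw [hd, norm_smul]
        have h1 : ‖v'‖ ≤ 1 := by rw [Real.norm_eq_abs, abs_of_nonneg hv]; linarith
        have h2 : ‖v'‖ * ‖b - a‖ ≤ ‖b - a‖ := by
          nlinarith [norm_nonneg (b - a), norm_nonneg v']
        exact mul_le_mul_of_nonneg_left h2 hL
  rw [Real.norm_eq_abs] at key
  have habs := (abs_le.mp key).2
  have hin : ⟪gradient f a, b⟫ - ⟪gradient f a, a⟫ = ⟪gradient f a, b - a⟫ := by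
    rw [inner_sub_right]
  nlinarith [sq_nonneg ‖b - a‖]

end Aux

/-- The Frank–Wolfe (duality) gap of `f` over `X` at `x`:
`G(x) = sup_{w ∈ X} ⟪w − x, −∇f(x)⟫`. -/
noncomputable def fwGap {d : ℕ} (f : EuclideanSpace ℝ (Fin d) → ℝ)
    (X : Set (EuclideanSpace ℝ (Fin d))) (x : EuclideanSpace ℝ (Fin d)) : ℝ :=
  sSup ((fun w => ⟪w - x, -gradient f x⟫) '' X)

set_option maxHeartbeats 2000000 in
/-- Per-iteration descent inequality for momentum Frank–Wolfe. -/
theorem momentum_fw_descent_inequality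
    (d : ℕ) (hd : 1 ≤ d)
    (X : Set (EuclideanSpace ℝ (Fin d))) (hXne : X.Nonempty)
    (hXcomp : IsCompact X) (hXconv : Convex ℝ X)
    (D : ℝ) (hD : 0 < D)
    (hdiam : ∀ u ∈ X, ∀ v ∈ X, ‖u - v‖ ≤ D)
    (f : EuclideanSpace ℝ (Fin d) → ℝ)
    (L : ℝ) (hL : 0 < L)
    (hdiff : Differentiable ℝ f)
    (hLip : ∀ u v', ‖gradient f u - gradient f v'‖ ≤ L * ‖u - v'‖)
    (η : ℝ) (hη : 0 < η) (hη23 : η < 2 / 3)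
    (x y z w v : ℕ → EuclideanSpace ℝ (Fin d))
    (hx0 : x 0 = z 0) (hy0 : y 0 = z 0) (hz0 : z 0 ∈ X)
    (hwX : ∀ t, w t ∈ X)
    (hwopt : ∀ t, ∀ w' ∈ X, ⟪w', -(v t)⟫ ≤ ⟪w t, -(v t)⟫)
    (hxrec : ∀ t : ℕ, x (t + 1)
      = x t + ((1 + 1 / (((t : ℝ) + 1) * ((t : ℝ) + 2))) * η) • (w t - x t))
    (hyrec : ∀ t : ℕ, y (t + 1) = z t + η • (w t - z t))
    (hzrec : ∀ t : ℕ, z (t + 1)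
      = (1 - 1 / ((t : ℝ) + 2)) • y (t + 1) + (1 / ((t : ℝ) + 2)) • x (t + 1))
    :
    ∀ t : ℕ, f (z (t + 1))
      ≤ f (z t) + 4 * L * η ^ 2 * D ^ 2 - η * fwGap f X (z t)
        + 2 * η * D * ‖gradient f (z t) - v t‖
        + (η * D / ((t : ℝ) + 2)) * ∑ i ∈ Finset.range t,
            (1 / (((i : ℝ) + 1) * ((i : ℝ) + 2))) * ‖gradient f (z i) - v i‖ := by
  have hη1 : η < 1 := by linarith
  have hL0 : (0:ℝ) ≤ L := le_of_lt hL
  have hq : ∀ s : ℕ, 0 < 1 / (((s:ℝ)+1) * ((s:ℝ)+2)) := by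
    intro s; positivity
  have hp : ∀ s : ℕ, 0 < 1 / ((s:ℝ)+2) := by
    intro s; positivity
  have hq2 : ∀ s : ℕ, 1 / (((s:ℝ)+1) * ((s:ℝ)+2)) ≤ 1/2 := by
    intro s
    rw [div_le_div_iff₀ (by positivity) (by norm_num)]
    have : (0:ℝ) ≤ (s:ℝ) := Nat.cast_nonneg s
    nlinarith
  have hp2 : ∀ s : ℕ, 1 / ((s:ℝ)+2) ≤ 1/2 := by
    intro s
    rw [div_le_div_iff₀ (by positivity) (by norm_num)]
    have : (0:ℝ) ≤ (s:ℝ) := Nat.cast_nonneg s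
    nlinarith
  have hqp : ∀ s : ℕ, 1 / (((s:ℝ)+1) * ((s:ℝ)+2)) ≤ 1 / ((s:ℝ)+2) := by
    intro s
    apply div_le_div_of_nonneg_left (by norm_num) (by positivity)
    have : (0:ℝ) ≤ (s:ℝ) := Nat.cast_nonneg s
    nlinarith
  have hγ0 : ∀ s : ℕ, 0 ≤ (1 + 1 / (((s:ℝ)+1) * ((s:ℝ)+2))) * η := by
    intro s; have := hq s; positivity
  have hγ1 : ∀ s : ℕ, (1 + 1 / (((s:ℝ)+1) * ((s:ℝ)+2))) * η ≤ 1 := by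
    intro s
    have h1 := hq2 s; have h2 := hq s
    nlinarith
  -- memberships
  have hmem : ∀ s : ℕ, x s ∈ X ∧ y s ∈ X ∧ z s ∈ X := by
    intro s
    induction s with
    | zero => exact ⟨hx0 ▸ hz0, hy0 ▸ hz0, hz0⟩
    | succ s ih =>
      obtain ⟨hxs, hys, hzs⟩ := ih
      have hxn : x (s+1) ∈ X := by
        rw [hxrec s]
        exact hXconv.add_smul_sub_mem hxs (hwX s) ⟨hγ0 s, hγ1 s⟩
      have hyn : y (s+1) ∈ X := by
        rw [hyrec s]
        exact hXconv.add_smul_sub_mem hzs (hwX s) ⟨le_of_lt hη, le_of_lt hη1⟩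
      have hzn : z (s+1) ∈ X := by
        rw [hzrec s]
        have hps := hp s; have hps2 := hp2 s
        exact hXconv hyn hxn (by linarith) (by linarith) (by ring)
      exact ⟨hxn, hyn, hzn⟩
  have hwz : ∀ s : ℕ, ‖w s - z s‖ ≤ D := fun s => hdiam _ (hwX s) _ (hmem s).2.2
  -- key vector identities
  have key2 : ∀ s : ℕ, x (s+1) - z (s+1)
      = ((1 - 1/((s:ℝ)+2)) * (1 - (1 + 1/(((s:ℝ)+1)*((s:ℝ)+2)))*η)) • (x s - z s)
        + ((1 - 1/((s:ℝ)+2)) * (1/(((s:ℝ)+1)*((s:ℝ)+2)) * η)) • (w s - z s) := by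
    intro s
    rw [hzrec s, hyrec s, hxrec s]
    module
  have key1 : ∀ s : ℕ, z (s+1) - z s
      = ((1 - 1/((s:ℝ)+2)) * η + (1/((s:ℝ)+2)) * ((1 + 1/(((s:ℝ)+1)*((s:ℝ)+2)))*η)) • (w s - z s)
        + ((1/((s:ℝ)+2)) * (1 - (1 + 1/(((s:ℝ)+1)*((s:ℝ)+2)))*η)) • (x s - z s) := by
    intro s
    rw [hzrec s, hyrec s, hxrec s]
    module
  -- nonnegativity of coefficients
  have hc10 : ∀ s : ℕ, 0 ≤ (1 - 1/((s:ℝ)+2)) * (1 - (1 + 1/(((s:ℝ)+1)*((s:ℝ)+2)))*η) := by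
    intro s
    exact mul_nonneg (by linarith [hp2 s]) (by linarith [hγ1 s])
  have hc20 : ∀ s : ℕ, 0 ≤ (1 - 1/((s:ℝ)+2)) * (1/(((s:ℝ)+1)*((s:ℝ)+2)) * η) := by
    intro s
    exact mul_nonneg (by linarith [hp2 s]) (le_of_lt (mul_pos (hq s) hη))
  have hcc0 : ∀ s : ℕ, 0 ≤ (1 - 1/((s:ℝ)+2))*η + (1/((s:ℝ)+2))*((1 + 1/(((s:ℝ)+1)*((s:ℝ)+2)))*η) := by
    intro s
    have h1 : 0 ≤ (1 - 1/((s:ℝ)+2))*η := mul_nonneg (by linarith [hp2 s]) hη.le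
    have h2 : 0 ≤ (1/((s:ℝ)+2))*((1 + 1/(((s:ℝ)+1)*((s:ℝ)+2)))*η) :=
      mul_nonneg (hp s).le (hγ0 s)
    linarith
  have haa0 : ∀ s : ℕ, 0 ≤ (1/((s:ℝ)+2))*(1 - (1 + 1/(((s:ℝ)+1)*((s:ℝ)+2)))*η) := by
    intro s
    exact mul_nonneg (hp s).le (by linarith [hγ1 s])
  -- norm bound on x s - z s
  have henorm : ∀ s : ℕ, ‖x s - z s‖ ≤ η * D := by
    intro s
    induction s with
    | zero => rw [hx0]; simp; positivity
    | succ s ih =>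
      rw [key2 s]
      have h1 := mfw_norm_smul_add_smul_le _ _ (hc10 s) (hc20 s) (x s - z s) (w s - z s)
      have h2 : ((1 - 1/((s:ℝ)+2)) * (1 - (1 + 1/(((s:ℝ)+1)*((s:ℝ)+2)))*η)) * ‖x s - z s‖
          ≤ ((1 - 1/((s:ℝ)+2)) * (1 - (1 + 1/(((s:ℝ)+1)*((s:ℝ)+2)))*η)) * (η * D) :=
        mul_le_mul_of_nonneg_left ih (hc10 s)
      have h3 : ((1 - 1/((s:ℝ)+2)) * (1/(((s:ℝ)+1)*((s:ℝ)+2)) * η)) * ‖w s - z s‖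
          ≤ ((1 - 1/((s:ℝ)+2)) * (1/(((s:ℝ)+1)*((s:ℝ)+2)) * η)) * D :=
        mul_le_mul_of_nonneg_left (hwz s) (hc20 s)
      have e2 := mfw_scal_e (1/((s:ℝ)+2)) (1/(((s:ℝ)+1)*((s:ℝ)+2))) η D
        (hp s) (hp2 s) (hq s) (hqp s) hη hη1 hD
      linarith
  -- norm bound on the step z (s+1) - z s
  have hu_gen : ∀ s : ℕ, ‖z (s+1) - z s‖
      ≤ ((1 - 1/((s:ℝ)+2))*η + (1/((s:ℝ)+2))*((1 + 1/(((s:ℝ)+1)*((s:ℝ)+2)))*η))*D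
        + ((1/((s:ℝ)+2))*(1 - (1 + 1/(((s:ℝ)+1)*((s:ℝ)+2)))*η))*‖x s - z s‖ := by
    intro s
    rw [key1 s]
    have h1 := mfw_norm_smul_add_smul_le _ _ (hcc0 s) (haa0 s) (w s - z s) (x s - z s)
    have h2 : ((1 - 1/((s:ℝ)+2))*η + (1/((s:ℝ)+2))*((1 + 1/(((s:ℝ)+1)*((s:ℝ)+2)))*η)) * ‖w s - z s‖
        ≤ ((1 - 1/((s:ℝ)+2))*η + (1/((s:ℝ)+2))*((1 + 1/(((s:ℝ)+1)*((s:ℝ)+2)))*η)) * D :=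
      mul_le_mul_of_nonneg_left (hwz s) (hcc0 s)
    linarith
  have hu_norm : ∀ s : ℕ, ‖z (s+1) - z s‖ ≤ 3/2 * (η * D) := by
    intro s
    rcases s with _ | n
    · have h0 : ‖x 0 - z 0‖ = 0 := by rw [hx0]; simp
      have h := hu_gen 0
      rw [h0] at h
      have hs := mfw_scal_u0 (1/(((0:ℕ):ℝ)+2)) (1/((((0:ℕ):ℝ)+1)*(((0:ℕ):ℝ)+2)))
        η (hp 0) (hp2 0) (hq 0) (hq2 0) hη
      have hs2 := mul_le_mul_of_nonneg_right hs hD.le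
      nlinarith [h, hs2, mul_pos hη hD]
    · have h := hu_gen (n+1)
      have hp3 : (0:ℝ) < 1/(((n+1:ℕ):ℝ)+2) := hp (n+1)
      have hp3' : 1/(((n+1:ℕ):ℝ)+2) ≤ 1/3 := by
        push_cast
        rw [div_le_div_iff₀ (by positivity) (by norm_num)]
        have : (0:ℝ) ≤ (n:ℝ) := Nat.cast_nonneg n
        nlinarith
      have hq3 : (0:ℝ) < 1/((((n+1:ℕ):ℝ)+1)*(((n+1:ℕ):ℝ)+2)) := hq (n+1)
      have hq3' : 1/((((n+1:ℕ):ℝ)+1)*(((n+1:ℕ):ℝ)+2)) ≤ 1/6 := by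
        push_cast
        rw [div_le_div_iff₀ (by positivity) (by norm_num)]
        have : (0:ℝ) ≤ (n:ℝ) := Nat.cast_nonneg n
        nlinarith
      have hs := mfw_scal_u1 (1/(((n+1:ℕ):ℝ)+2)) (1/((((n+1:ℕ):ℝ)+1)*(((n+1:ℕ):ℝ)+2)))
        η D ‖x (n+1) - z (n+1)‖ hp3 hp3' hq3 hq3' hη hη23 hD (norm_nonneg _) (henorm (n+1))
      linarith
  -- ⟪g, w - z⟫ ≤ D‖g - v‖
  have hv0 : ∀ s : ℕ, ⟪gradient f (z s), w s - z s⟫ ≤ D * ‖gradient f (z s) - v s‖ := by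
    intro s
    have h := hwopt s (z s) (hmem s).2.2
    have hcs := real_inner_le_norm (gradient f (z s) - v s) (w s - z s)
    have h2 : ‖gradient f (z s) - v s‖ * ‖w s - z s‖ ≤ ‖gradient f (z s) - v s‖ * D :=
      mul_le_mul_of_nonneg_left (hwz s) (norm_nonneg _)
    have c1 := real_inner_comm (v s) (w s)
    have c2 := real_inner_comm (v s) (z s)
    simp only [inner_sub_left, inner_sub_right, inner_neg_right] at h hcs ⊢
    linarith
  -- uniform upper bound on elements of the gap's defining set
  have hub : ∀ s : ℕ, ∀ r ∈ (fun w' => ⟪w' - z s, -gradient f (z s)⟫) '' X,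
      r ≤ D * ‖gradient f (z s) - v s‖ - ⟪gradient f (z s), w s - z s⟫ := by
    intro s r hr
    obtain ⟨w', hw', rfl⟩ := hr
    have h := hwopt s w' hw'
    have hcs := real_inner_le_norm (gradient f (z s) - v s) (w s - w')
    have h2 : ‖gradient f (z s) - v s‖ * ‖w s - w'‖ ≤ ‖gradient f (z s) - v s‖ * D :=
      mul_le_mul_of_nonneg_left (hdiam _ (hwX s) _ hw') (norm_nonneg _)
    have c1 := real_inner_comm (v s) (w s)
    have c2 := real_inner_comm (v s) w'
    have c3 := real_inner_comm (gradient f (z s)) w'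
    have c4 := real_inner_comm (gradient f (z s)) (z s)
    simp only [inner_sub_left, inner_sub_right, inner_neg_right] at h hcs ⊢
    linarith
  have hgapub : ∀ s : ℕ, fwGap f X (z s)
      ≤ D * ‖gradient f (z s) - v s‖ - ⟪gradient f (z s), w s - z s⟫ := by
    intro s
    exact csSup_le (hXne.image _) (hub s)
  have hgap0 : ∀ s : ℕ, 0 ≤ fwGap f X (z s) := by
    intro s
    have hmem0 : (0:ℝ) ∈ (fun w' => ⟪w' - z s, -gradient f (z s)⟫) '' X := by
      refine ⟨z s, (hmem s).2.2, ?_⟩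
      simp
    exact le_csSup ⟨_, fun r hr => hub s r hr⟩ hmem0
  -- the invariant on ⟪g s, x s - z s⟫
  have hN : ∀ s : ℕ, ((s:ℝ)+1) * ⟪gradient f (z s), x s - z s⟫
      ≤ η*D*(∑ i ∈ Finset.range s, (1/((i:ℝ)+2)) * ‖gradient f (z i) - v i‖)
        + (s:ℝ)*((s:ℝ)+3)*(L*η^2*D^2) := by
    intro s
    induction s with
    | zero =>
      have h0 : x 0 - z 0 = 0 := by rw [hx0]; simp
      rw [h0]
      simp
    | succ s ih =>
      have d3 : ‖gradient f (z (s+1)) - gradient f (z s)‖ ≤ L*(3/2*(η*D)) :=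
        le_trans (hLip _ _) (mul_le_mul_of_nonneg_left (hu_norm s) hL0)
      have d2 : ⟪gradient f (z (s+1)) - gradient f (z s), x (s+1) - z (s+1)⟫
          ≤ (L*(3/2*(η*D)))*(η*D) :=
        le_trans (real_inner_le_norm _ _)
          (mul_le_mul d3 (henorm (s+1)) (norm_nonneg _) (by positivity))
      have dsum : gradient f (z s) + (gradient f (z (s+1)) - gradient f (z s))
          = gradient f (z (s+1)) := by abel
      have d1 : ⟪gradient f (z (s+1)), x (s+1) - z (s+1)⟫
          = ⟪gradient f (z s), x (s+1) - z (s+1)⟫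
            + ⟪gradient f (z (s+1)) - gradient f (z s), x (s+1) - z (s+1)⟫ := by
        rw [← inner_add_left, dsum]
      have d4 : ⟪gradient f (z s), x (s+1) - z (s+1)⟫
          = ((1 - 1/((s:ℝ)+2)) * (1 - (1 + 1/(((s:ℝ)+1)*((s:ℝ)+2)))*η))
              * ⟪gradient f (z s), x s - z s⟫
            + ((1 - 1/((s:ℝ)+2)) * (1/(((s:ℝ)+1)*((s:ℝ)+2)) * η))
              * ⟪gradient f (z s), w s - z s⟫ := by
        rw [key2 s, inner_add_right, real_inner_smul_right, real_inner_smul_right]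
      have d5 : ⟪gradient f (z s), w s - z s⟫ ≤ D * ‖gradient f (z s) - v s‖ := hv0 s
      -- multiply by (s+2) and combine
      have hT : ⟪gradient f (z (s+1)), x (s+1) - z (s+1)⟫
          ≤ ((1 - 1/((s:ℝ)+2)) * (1 - (1 + 1/(((s:ℝ)+1)*((s:ℝ)+2)))*η))
              * ⟪gradient f (z s), x s - z s⟫
            + ((1 - 1/((s:ℝ)+2)) * (1/(((s:ℝ)+1)*((s:ℝ)+2)) * η))
              * (D * ‖gradient f (z s) - v s‖)
            + (L*(3/2*(η*D)))*(η*D) := by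
        have := mul_le_mul_of_nonneg_left d5 (hc20 s)
        linarith [d1.le, d2]
      have m1 : ((s:ℝ)+2) * ⟪gradient f (z (s+1)), x (s+1) - z (s+1)⟫
          ≤ ((s:ℝ)+2) * (((1 - 1/((s:ℝ)+2)) * (1 - (1 + 1/(((s:ℝ)+1)*((s:ℝ)+2)))*η))
              * ⟪gradient f (z s), x s - z s⟫
            + ((1 - 1/((s:ℝ)+2)) * (1/(((s:ℝ)+1)*((s:ℝ)+2)) * η))
              * (D * ‖gradient f (z s) - v s‖)
            + (L*(3/2*(η*D)))*(η*D)) :=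
        mul_le_mul_of_nonneg_left hT (by positivity)
      have m2 : ((s:ℝ)+2) * (((1 - 1/((s:ℝ)+2)) * (1 - (1 + 1/(((s:ℝ)+1)*((s:ℝ)+2)))*η))
            * ⟪gradient f (z s), x s - z s⟫)
          = (1 - (1 + 1/(((s:ℝ)+1)*((s:ℝ)+2)))*η)
            * (((s:ℝ)+1) * ⟪gradient f (z s), x s - z s⟫) := by
        have hBne : ((s:ℝ)+2) ≠ 0 := by positivity
        field_simp
        ring
      have hN0 : 0 ≤ η*D*(∑ i ∈ Finset.range s, (1/((i:ℝ)+2)) * ‖gradient f (z i) - v i‖)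
          + (s:ℝ)*((s:ℝ)+3)*(L*η^2*D^2) := by
        have hsum0 : 0 ≤ ∑ i ∈ Finset.range s, (1/((i:ℝ)+2)) * ‖gradient f (z i) - v i‖ :=
          Finset.sum_nonneg fun i _ => mul_nonneg (by positivity) (norm_nonneg _)
        have : (0:ℝ) ≤ (s:ℝ) := Nat.cast_nonneg s
        have h1 : 0 ≤ η*D := by positivity
        nlinarith [mul_nonneg h1 hsum0,
          mul_nonneg (mul_nonneg this (by linarith : (0:ℝ) ≤ (s:ℝ)+3))
            (show (0:ℝ) ≤ L*η^2*D^2 by positivity)]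
      have m3 : (1 - (1 + 1/(((s:ℝ)+1)*((s:ℝ)+2)))*η)
            * (((s:ℝ)+1) * ⟪gradient f (z s), x s - z s⟫)
          ≤ η*D*(∑ i ∈ Finset.range s, (1/((i:ℝ)+2)) * ‖gradient f (z i) - v i‖)
            + (s:ℝ)*((s:ℝ)+3)*(L*η^2*D^2) := by
        have hγle := hγ1 s
        have hγge := hγ0 s
        have step1 : (1 - (1 + 1/(((s:ℝ)+1)*((s:ℝ)+2)))*η)
              * (((s:ℝ)+1) * ⟪gradient f (z s), x s - z s⟫)
            ≤ (1 - (1 + 1/(((s:ℝ)+1)*((s:ℝ)+2)))*η)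
              * (η*D*(∑ i ∈ Finset.range s, (1/((i:ℝ)+2)) * ‖gradient f (z i) - v i‖)
                + (s:ℝ)*((s:ℝ)+3)*(L*η^2*D^2)) :=
          mul_le_mul_of_nonneg_left ih (by linarith)
        nlinarith [hN0, step1]
      have m6 : ((s:ℝ)+2) * (((1 - 1/((s:ℝ)+2)) * (1/(((s:ℝ)+1)*((s:ℝ)+2)) * η))
            * (D * ‖gradient f (z s) - v s‖))
          = η*D*((1/((s:ℝ)+2)) * ‖gradient f (z s) - v s‖) := by
        have h1 : ((s:ℝ)+1) ≠ 0 := by positivity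
        have h2 : ((s:ℝ)+2) ≠ 0 := by positivity
        field_simp
        ring
      have m7 : ((s:ℝ)+2) * ((L*(3/2*(η*D)))*(η*D)) ≤ 2*((s:ℝ)+2)*(L*η^2*D^2) := by
        have : (0:ℝ) ≤ (s:ℝ) := Nat.cast_nonneg s
        nlinarith [mul_pos (mul_pos hL (mul_pos hη hη)) (mul_pos hD hD)]
      -- final combination
      have hsum : η*D*(∑ i ∈ Finset.range (s+1), (1/((i:ℝ)+2)) * ‖gradient f (z i) - v i‖)
          = η*D*((∑ i ∈ Finset.range s, (1/((i:ℝ)+2)) * ‖gradient f (z i) - v i‖)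
            + (1/((s:ℝ)+2)) * ‖gradient f (z s) - v s‖) := by
        rw [Finset.sum_range_succ]
      push_cast
      push_cast at m1 m2 m3 m6 m7 hsum
      linarith [m1, m2, m3, m6, m7, hsum.le, hsum.ge]
  -- final assembly
  intro t
  have hdesc := mfw_descent f L hL0 hdiff hLip (z t) (z (t+1))
  have hsplit : ⟪gradient f (z t), z (t+1) - z t⟫
      = ((1 - 1/((t:ℝ)+2))*η + (1/((t:ℝ)+2))*((1 + 1/(((t:ℝ)+1)*((t:ℝ)+2)))*η))
          * ⟪gradient f (z t), w t - z t⟫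
        + ((1/((t:ℝ)+2))*(1 - (1 + 1/(((t:ℝ)+1)*((t:ℝ)+2)))*η))
          * ⟪gradient f (z t), x t - z t⟫ := by
    rw [key1 t, inner_add_right, real_inner_smul_right, real_inner_smul_right]
  have hccl : η ≤ (1 - 1/((t:ℝ)+2))*η + (1/((t:ℝ)+2))*((1 + 1/(((t:ℝ)+1)*((t:ℝ)+2)))*η) := by
    nlinarith [mul_nonneg (mul_nonneg (hp t).le (hq t).le) hη.le]
  have hccu : (1 - 1/((t:ℝ)+2))*η + (1/((t:ℝ)+2))*((1 + 1/(((t:ℝ)+1)*((t:ℝ)+2)))*η) ≤ 2*η := by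
    nlinarith [mul_le_mul_of_nonneg_right
      (mul_le_mul (hp2 t) (hq2 t) (hq t).le (by norm_num)) hη.le]
  have b1 : ((1 - 1/((t:ℝ)+2))*η + (1/((t:ℝ)+2))*((1 + 1/(((t:ℝ)+1)*((t:ℝ)+2)))*η))
        * ⟪gradient f (z t), w t - z t⟫
      ≤ ((1 - 1/((t:ℝ)+2))*η + (1/((t:ℝ)+2))*((1 + 1/(((t:ℝ)+1)*((t:ℝ)+2)))*η))
        * (D * ‖gradient f (z t) - v t‖ - fwGap f X (z t)) :=
    mul_le_mul_of_nonneg_left (by linarith [hgapub t]) (by linarith [hccl])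
  rw [mul_sub] at b1
  have b2 : ((1 - 1/((t:ℝ)+2))*η + (1/((t:ℝ)+2))*((1 + 1/(((t:ℝ)+1)*((t:ℝ)+2)))*η))
        * (D * ‖gradient f (z t) - v t‖)
      ≤ 2*η*(D * ‖gradient f (z t) - v t‖) :=
    mul_le_mul_of_nonneg_right hccu (by positivity)
  have b3 : η * fwGap f X (z t)
      ≤ ((1 - 1/((t:ℝ)+2))*η + (1/((t:ℝ)+2))*((1 + 1/(((t:ℝ)+1)*((t:ℝ)+2)))*η))
        * fwGap f X (z t) :=
    mul_le_mul_of_nonneg_right hccl (hgap0 t)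
  have hb1 : ((1/((t:ℝ)+2))*(1 - (1 + 1/(((t:ℝ)+1)*((t:ℝ)+2)))*η))
        * ⟪gradient f (z t), x t - z t⟫
      = (((1/((t:ℝ)+2))*(1 - (1 + 1/(((t:ℝ)+1)*((t:ℝ)+2)))*η))/((t:ℝ)+1))
        * (((t:ℝ)+1) * ⟪gradient f (z t), x t - z t⟫) := by
    have h1 : ((t:ℝ)+1) ≠ 0 := by positivity
    field_simp
  have hb2 : (((1/((t:ℝ)+2))*(1 - (1 + 1/(((t:ℝ)+1)*((t:ℝ)+2)))*η))/((t:ℝ)+1))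
        * (((t:ℝ)+1) * ⟪gradient f (z t), x t - z t⟫)
      ≤ (((1/((t:ℝ)+2))*(1 - (1 + 1/(((t:ℝ)+1)*((t:ℝ)+2)))*η))/((t:ℝ)+1))
        * (η*D*(∑ i ∈ Finset.range t, (1/((i:ℝ)+2)) * ‖gradient f (z i) - v i‖)
          + (t:ℝ)*((t:ℝ)+3)*(L*η^2*D^2)) :=
    mul_le_mul_of_nonneg_left (hN t) (div_nonneg (haa0 t) (by positivity))
  have hb3 : (((1/((t:ℝ)+2))*(1 - (1 + 1/(((t:ℝ)+1)*((t:ℝ)+2)))*η))/((t:ℝ)+1))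
        * (η*D*(∑ i ∈ Finset.range t, (1/((i:ℝ)+2)) * ‖gradient f (z i) - v i‖))
      ≤ (η * D / ((t:ℝ)+2)) * ∑ i ∈ Finset.range t,
          (1 / (((i:ℝ)+1) * ((i:ℝ)+2))) * ‖gradient f (z i) - v i‖ := by
    have e1 : (((1/((t:ℝ)+2))*(1 - (1 + 1/(((t:ℝ)+1)*((t:ℝ)+2)))*η))/((t:ℝ)+1))
          * (η*D*(∑ i ∈ Finset.range t, (1/((i:ℝ)+2)) * ‖gradient f (z i) - v i‖))
        = ∑ i ∈ Finset.range t,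
            (((1/((t:ℝ)+2))*(1 - (1 + 1/(((t:ℝ)+1)*((t:ℝ)+2)))*η))/((t:ℝ)+1))
              * (η*D*((1/((i:ℝ)+2)) * ‖gradient f (z i) - v i‖)) := by
      rw [Finset.mul_sum, Finset.mul_sum]
    have e2 : (η * D / ((t:ℝ)+2)) * ∑ i ∈ Finset.range t,
          (1 / (((i:ℝ)+1) * ((i:ℝ)+2))) * ‖gradient f (z i) - v i‖
        = ∑ i ∈ Finset.range t, (η * D / ((t:ℝ)+2))
            * ((1 / (((i:ℝ)+1) * ((i:ℝ)+2))) * ‖gradient f (z i) - v i‖) :=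
      Finset.mul_sum _ _ _
    rw [e1, e2]
    apply Finset.sum_le_sum
    intro i hi
    have hit : (i:ℝ)+1 ≤ (t:ℝ) := by
      have := Nat.succ_le_of_lt (Finset.mem_range.mp hi)
      exact_mod_cast this
    have hi0 : (0:ℝ) ≤ (i:ℝ) := Nat.cast_nonneg i
    have ht0 : (0:ℝ) ≤ (t:ℝ) := Nat.cast_nonneg t
    have hne1 : ((t:ℝ)+1) ≠ 0 := by positivity
    have hne2 : ((t:ℝ)+2) ≠ 0 := by positivity
    have hne3 : ((i:ℝ)+1) ≠ 0 := by positivity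
    have hne4 : ((i:ℝ)+2) ≠ 0 := by positivity
    have hcoe : (((1/((t:ℝ)+2))*(1 - (1 + 1/(((t:ℝ)+1)*((t:ℝ)+2)))*η))/((t:ℝ)+1))
          * (η*D*((1/((i:ℝ)+2)) * ‖gradient f (z i) - v i‖))
        = ((1 - (1 + 1/(((t:ℝ)+1)*((t:ℝ)+2)))*η)*((i:ℝ)+1))
          * ((η*D*‖gradient f (z i) - v i‖)
            /((((t:ℝ)+1)*((t:ℝ)+2))*(((i:ℝ)+1)*((i:ℝ)+2)))) := by
      field_simp
    have hcoe2 : (η * D / ((t:ℝ)+2))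
          * ((1 / (((i:ℝ)+1) * ((i:ℝ)+2))) * ‖gradient f (z i) - v i‖)
        = (((t:ℝ)+1)) * ((η*D*‖gradient f (z i) - v i‖)
            /((((t:ℝ)+1)*((t:ℝ)+2))*(((i:ℝ)+1)*((i:ℝ)+2)))) := by
      field_simp
    rw [hcoe, hcoe2]
    apply mul_le_mul_of_nonneg_right ?_ (by positivity)
    nlinarith [hγ0 t, hγ1 t, mul_nonneg (hγ0 t) (by linarith : (0:ℝ) ≤ (i:ℝ)+1)]
  have hb4 : (((1/((t:ℝ)+2))*(1 - (1 + 1/(((t:ℝ)+1)*((t:ℝ)+2)))*η))/((t:ℝ)+1))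
        * ((t:ℝ)*((t:ℝ)+3)*(L*η^2*D^2)) ≤ L*η^2*D^2 := by
    have ht0 : (0:ℝ) ≤ (t:ℝ) := Nat.cast_nonneg t
    have hX0 : (0:ℝ) ≤ L*η^2*D^2 := by positivity
    have heq : (((1/((t:ℝ)+2))*(1 - (1 + 1/(((t:ℝ)+1)*((t:ℝ)+2)))*η))/((t:ℝ)+1))
        = (1 - (1 + 1/(((t:ℝ)+1)*((t:ℝ)+2)))*η)/(((t:ℝ)+1)*((t:ℝ)+2)) := by
      rw [div_eq_div_iff (by positivity) (by positivity)]
      field_simp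
    rw [heq, div_mul_eq_mul_div, div_le_iff₀ (by positivity)]
    nlinarith [mul_nonneg (mul_nonneg (hγ0 t)
        (mul_nonneg ht0 (by linarith : (0:ℝ) ≤ (t:ℝ)+3))) hX0,
      hγ1 t, hX0, mul_nonneg ht0 hX0,
      mul_nonneg (mul_nonneg ht0 ht0) hX0]
  have hquad : L*‖z (t+1) - z t‖^2 ≤ L*((3/2*(η*D))^2) :=
    mul_le_mul_of_nonneg_left (pow_le_pow_left₀ (norm_nonneg _) (hu_norm t) 2) hL0
  have hX0 : (0:ℝ) ≤ L*η^2*D^2 := by positivity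
  linarith [hdesc, hsplit.le, hsplit.ge, b1, b2, b3, hb1.le, hb1.ge, hb2, hb3, hb4,
    hquad, hX0]
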